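/- Let a = 2/(5d+1), x^j = a e^j for j = 1,…,d, and x^{d+1} = −a ∑_{j=1}^d e^j in ℝ^d with the Euclidean norm. Then the closed unit ball B₂ is contained in the union of the open balls B°₂(x^j, r) of radius r, for any r > (1 − a²)^{1/2}. -/

import Mathlib

open scoped RealInnerProductSpace
set_option maxHeartbeats 1000000

theorem stmt4 (d : ℕ) (hd : 1 ≤ d) (a r : ℝ) (ha : a = 2 / (5 * d + 1))
    (hr : Real.sqrt (1 - a ^ 2) < r) :
    Metric.closedBall (0 : EuclideanSpace ℝ (Fin d)) 1 ⊆
      (⋃ j : Fin d, Metric.ball (a • EuclideanSpace.single j 1) r) ∪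
      Metric.ball (-(a • ∑ j : Fin d, EuclideanSpace.single j 1)) r := by
  have hd1 : (1:ℝ) ≤ (d:ℝ) := by exact_mod_cast hd
  have h5 : (0:ℝ) < 5*d+1 := by linarith
  have ha0 : 0 < a := by rw [ha]; positivity
  have haa : a * (5*d+1) = 2 := by rw [ha]; field_simp
  have ha3 : a ≤ 1/3 := by nlinarith
  have h1a : 0 ≤ 1 - a^2 := by nlinarith
  -- helper: norm bound from squared norm bound
  have key : ∀ v : EuclideanSpace ℝ (Fin d), ‖v‖^2 ≤ 1 - a^2 → ‖v‖ < r := by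
    intro v hv
    have : ‖v‖ ≤ Real.sqrt (1 - a^2) := by
      rw [show ‖v‖ = Real.sqrt (‖v‖^2) from (Real.sqrt_sq (norm_nonneg v)).symm]
      exact Real.sqrt_le_sqrt hv
    linarith
  intro x hx
  have hx1 : ‖x‖ ≤ 1 := by simpa using hx
  have ht : ‖x‖^2 ≤ 1 := by nlinarith [norm_nonneg x]
  by_cases h : ∃ j, a ≤ x j
  · obtain ⟨j, hj⟩ := h
    left
    refine Set.mem_iUnion.2 ⟨j, ?_⟩
    rw [Metric.mem_ball, dist_eq_norm]
    apply key
    have hexp : ‖x - a • EuclideanSpace.single j 1‖^2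
        = ‖x‖^2 - 2 * (a * x j) + a^2 := by
      rw [norm_sub_sq_real, real_inner_smul_right,
        EuclideanSpace.inner_single_right, norm_smul]
      simp [abs_of_pos ha0]
    rw [hexp]
    nlinarith
  · push_neg at h
    right
    rw [Metric.mem_ball, dist_eq_norm, sub_neg_eq_add]
    apply key
    set S := ∑ j, x j with hS
    have hinner : (inner ℝ x (a • ∑ j : Fin d, EuclideanSpace.single j (1:ℝ)) : ℝ) = a * S := by
      rw [real_inner_smul_right, inner_sum]
      congr 1
      refine Finset.sum_congr rfl fun j _ => ?_
      rw [EuclideanSpace.inner_single_right]; simp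
    have hnc : ‖a • ∑ j : Fin d, EuclideanSpace.single j (1:ℝ)‖^2 = a^2 * d := by
      have := real_inner_self_eq_norm_sq (a • ∑ j : Fin d, EuclideanSpace.single j (1:ℝ))
      rw [← this, real_inner_smul_right, real_inner_smul_left, inner_sum]
      have : ∀ j : Fin d, (inner ℝ (∑ i : Fin d, EuclideanSpace.single i (1:ℝ))
          (EuclideanSpace.single j (1:ℝ)) : ℝ) = 1 := by
        intro j
        rw [sum_inner]
        have : ∀ i : Fin d, (inner ℝ (EuclideanSpace.single i (1:ℝ))
            (EuclideanSpace.single j (1:ℝ)) : ℝ) = if i = j then 1 else 0 := by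
          intro i
          rw [EuclideanSpace.inner_single_left]
          simp [eq_comm]
        rw [Finset.sum_congr rfl fun i _ => this i]
        simp
      rw [Finset.sum_congr rfl fun j _ => this j]
      simp
      ring
    have hexp : ‖x + a • ∑ j : Fin d, EuclideanSpace.single j (1:ℝ)‖^2
        = ‖x‖^2 + 2 * (a * S) + a^2 * d := by
      rw [norm_add_sq_real, hinner, hnc]
    rw [hexp]
    -- coordinate facts
    have hsq : ‖x‖^2 = ∑ j, (x j)^2 := by
      rw [EuclideanSpace.norm_eq, Real.sq_sqrt (by positivity)]
      exact Finset.sum_congr rfl fun j _ => by rw [Real.norm_eq_abs, sq_abs]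
    have habs : ∀ j, |x j| ≤ 1 := by
      intro j
      have h1 : (x j)^2 ≤ ∑ i, (x i)^2 :=
        Finset.single_le_sum (f := fun i => (x i)^2) (fun i _ => sq_nonneg _)
          (Finset.mem_univ j)
      nlinarith [abs_nonneg (x j), sq_abs (x j)]
    set P := ∑ j, max (x j) 0 with hP
    have hPa : P ≤ d * a := by
      rw [hP]
      calc ∑ j, max (x j) 0 ≤ ∑ _j : Fin d, a :=
            Finset.sum_le_sum fun j _ => max_le (le_of_lt (h j)) (le_of_lt ha0)
        _ = d * a := by simp [mul_comm]
    have hcoord : ∀ j, (x j)^2 ≤ a * max (x j) 0 - min (x j) 0 := by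
      intro j
      rcases le_or_gt 0 (x j) with hj | hj
      · rw [max_eq_left hj, min_eq_right hj]
        nlinarith [h j]
      · rw [max_eq_right hj.le, min_eq_left hj.le]
        have := habs j
        rw [abs_of_neg hj] at this
        nlinarith
    have hsum : ‖x‖^2 ≤ a * P - (S - P) := by
      rw [hsq, hP, hS]
      have : ∑ j, (x j)^2 ≤ ∑ j, (a * max (x j) 0 - min (x j) 0) :=
        Finset.sum_le_sum fun j _ => hcoord j
      calc ∑ j, (x j)^2 ≤ ∑ j, (a * max (x j) 0 - min (x j) 0) := this
        _ = a * ∑ j, max (x j) 0 - (∑ j, x j - ∑ j, max (x j) 0) := by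
            rw [Finset.sum_sub_distrib, ← Finset.mul_sum]
            congr 1
            rw [← Finset.sum_sub_distrib]
            exact Finset.sum_congr rfl fun j _ => by
              have := min_add_max (x j) 0; linarith
    -- S ≤ (1+a) P - ‖x‖²  ≤ (1+a) d a - ‖x‖²
    have hScalc : S ≤ (1+a) * (d*a) - ‖x‖^2 := by nlinarith
    nlinarith [sq_nonneg a, norm_nonneg x]
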